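/- Let A be a nonnegative tensor of order m and dimension n and x a strictly positive vector. Assume ρ(A) is an eigenvalue with a nonzero nonnegative eigenvector. Then min_{1≤i≤n} (A x^{m-1})_i / x_i^{m-1} ≤ ρ(A). -/

import Mathlib

open Finset

/-- An `(m+1)`-order, `n`-dimensional real tensor. -/
abbrev Tensor (m n : ℕ) := (Fin (m + 1) → Fin n) → ℝ

/-- `(A x^{m-1})_i` over ℂ. -/
noncomputable def tApplyC {m n : ℕ} (T : Tensor m n) (x : Fin n → ℂ) (i : Fin n) : ℂ :=
  ∑ j : Fin m → Fin n, (T (Fin.cons i j) : ℂ) * ∏ k, x (j k)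

/-- `(A x^{m-1})_i` over ℝ. -/
noncomputable def tApply {m n : ℕ} (T : Tensor m n) (x : Fin n → ℝ) (i : Fin n) : ℝ :=
  ∑ j : Fin m → Fin n, T (Fin.cons i j) * ∏ k, x (j k)

/-- eigenvalue of a tensor -/
def IsEig {m n : ℕ} (T : Tensor m n) (lam : ℂ) : Prop :=
  ∃ x : Fin n → ℂ, x ≠ 0 ∧ ∀ i, tApplyC T x i = lam * (x i) ^ m

/-- spectral radius -/
noncomputable def specRad {m n : ℕ} (T : Tensor m n) : ℝ :=
  sSup {r : ℝ | ∃ lam : ℂ, IsEig T lam ∧ ‖lam‖ = r}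

/-- the unit tensor -/
def unitT (m n : ℕ) : Tensor m n := fun idx => if ∀ k, idx k = idx 0 then 1 else 0

def TNonneg {m n : ℕ} (T : Tensor m n) : Prop := ∀ idx, 0 ≤ T idx

def TEssNonneg {m n : ℕ} (T : Tensor m n) : Prop :=
  ∀ idx, (¬ ∀ k, idx k = idx 0) → 0 ≤ T idx

def TDiagonal {m n : ℕ} (T : Tensor m n) : Prop :=
  ∀ idx, (¬ ∀ k, idx k = idx 0) → T idx = 0

def TReducible {m n : ℕ} (T : Tensor m n) : Prop :=
  ∃ S : Finset (Fin n), S.Nonempty ∧ S ≠ Finset.univ ∧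
    ∀ i ∈ S, ∀ j : Fin m → Fin n, (∀ k, j k ∉ S) → T (Fin.cons i j) = 0

def TIrreducible {m n : ℕ} (T : Tensor m n) : Prop := ¬ TReducible T

def TSymmetric {m n : ℕ} (T : Tensor m n) : Prop :=
  ∀ (σ : Equiv.Perm (Fin (m + 1))) (idx : Fin (m + 1) → Fin n), T (idx ∘ σ) = T idx

/-- shift making a tensor nonnegative -/
noncomputable def shiftAlpha {m n : ℕ} (T : Tensor m n) : ℝ :=
  (∑ i : Fin n, |T (fun _ => i)|) + 1

/-- dominant eigenvalue of an essentially nonnegative tensor -/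
noncomputable def domEig {m n : ℕ} (T : Tensor m n) : ℝ :=
  specRad (fun idx => T idx + shiftAlpha T * unitT m n idx) - shiftAlpha T

/-- homogeneous form `T x^m` -/
noncomputable def tForm {m n : ℕ} (T : Tensor m n) (x : Fin n → ℝ) : ℝ :=
  ∑ idx : Fin (m + 1) → Fin n, T idx * ∏ k, x (idx k)

open Topology Filter
section H
variable {m n : ℕ}

lemma eig_bddAbove (hn : 0 < n) (A : Tensor m n) (hA : TNonneg A) :
    BddAbove {r : ℝ | ∃ lam : ℂ, IsEig A lam ∧ ‖lam‖ = r} := by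
  have hne : (Finset.univ : Finset (Fin n)).Nonempty := ⟨⟨0, hn⟩, Finset.mem_univ _⟩
  refine ⟨Finset.univ.sup' hne fun i => ∑ j : Fin m → Fin n, A (Fin.cons i j), ?_⟩
  rintro r ⟨lam, ⟨y, hy0, hy⟩, rfl⟩
  obtain ⟨i0, -, hi0⟩ := Finset.exists_mem_eq_sup' hne fun i => ‖y i‖
  set M := Finset.univ.sup' hne fun i => ‖y i‖ with hM
  have hMle : ∀ i, ‖y i‖ ≤ M := fun i =>
    Finset.le_sup' (f := fun i => ‖y i‖) (Finset.mem_univ i)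
  have hMpos : 0 < M := by
    obtain ⟨i, hi⟩ : ∃ i, y i ≠ 0 := Function.ne_iff.mp hy0
    exact lt_of_lt_of_le (by simpa using hi) (hMle i)
  have key : ‖lam‖ * M ^ m ≤ (∑ j : Fin m → Fin n, A (Fin.cons i0 j)) * M ^ m := by
    have h1 : ‖lam‖ * M ^ m = ‖tApplyC A y i0‖ := by
      rw [hy i0, norm_mul, norm_pow, hi0]
    rw [h1]
    calc ‖tApplyC A y i0‖
        ≤ ∑ j : Fin m → Fin n, ‖(A (Fin.cons i0 j) : ℂ) * ∏ k, y (j k)‖ :=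
          norm_sum_le _ _
      _ ≤ ∑ j : Fin m → Fin n, A (Fin.cons i0 j) * M ^ m := by
          refine Finset.sum_le_sum fun j _ => ?_
          rw [norm_mul, norm_prod]
          have h2 : ‖(A (Fin.cons i0 j) : ℂ)‖ = A (Fin.cons i0 j) := by
            rw [Complex.norm_real, Real.norm_eq_abs, abs_of_nonneg (hA _)]
          rw [h2]
          refine mul_le_mul_of_nonneg_left ?_ (hA _)
          calc ∏ k, ‖y (j k)‖ ≤ ∏ _k : Fin m, M :=
                Finset.prod_le_prod (fun k _ => (norm_nonneg _)) fun k _ => hMle _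
            _ = M ^ m := by rw [Finset.prod_const, Finset.card_univ, Fintype.card_fin]
      _ = (∑ j : Fin m → Fin n, A (Fin.cons i0 j)) * M ^ m := by rw [Finset.sum_mul]
  have := le_of_mul_le_mul_right key (pow_pos hMpos m)
  exact le_trans this (Finset.le_sup' (f := fun i => ∑ j : Fin m → Fin n, A (Fin.cons i j)) (Finset.mem_univ i0))

variable {m n : ℕ}

lemma tApply_nonneg (A : Tensor m n) (hA : TNonneg A) (x : Fin n → ℝ)
    (hx : ∀ i, 0 ≤ x i) (i : Fin n) : 0 ≤ tApply A x i :=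
  Finset.sum_nonneg fun _ _ => mul_nonneg (hA _) (Finset.prod_nonneg fun _ _ => hx _)

lemma tApply_mono (A : Tensor m n) (hA : TNonneg A) {x y : Fin n → ℝ}
    (hx : ∀ i, 0 ≤ x i) (hxy : ∀ i, x i ≤ y i) (i : Fin n) :
    tApply A x i ≤ tApply A y i :=
  Finset.sum_le_sum fun _ _ => mul_le_mul_of_nonneg_left
    (Finset.prod_le_prod (fun _ _ => hx _) fun _ _ => hxy _) (hA _)

lemma tApply_smul (A : Tensor m n) (c : ℝ) (x : Fin n → ℝ) (i : Fin n) :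
    tApply A (fun j => c * x j) i = c ^ m * tApply A x i := by
  unfold tApply
  rw [Finset.mul_sum]
  refine Finset.sum_congr rfl fun j _ => ?_
  rw [Finset.prod_mul_distrib, Finset.prod_const, Finset.card_univ, Fintype.card_fin]
  ring

lemma tApply_le_rowSum (A : Tensor m n) (hA : TNonneg A) {x : Fin n → ℝ}
    (hx0 : ∀ i, 0 ≤ x i) (hx1 : ∀ i, x i ≤ 1) (i : Fin n) :
    tApply A x i ≤ ∑ j : Fin m → Fin n, A (Fin.cons i j) := by
  refine Finset.sum_le_sum fun j _ => ?_
  have := Finset.prod_le_one (s := (Finset.univ : Finset (Fin m)))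
    (f := fun k => x (j k)) (fun k _ => hx0 _) (fun k _ => hx1 _)
  calc A (Fin.cons i j) * ∏ k, x (j k) ≤ A (Fin.cons i j) * 1 :=
        mul_le_mul_of_nonneg_left this (hA _)
    _ = A (Fin.cons i j) := mul_one _

lemma tApply_continuous (A : Tensor m n) (i : Fin n) :
    Continuous fun x : Fin n → ℝ => tApply A x i := by
  unfold tApply
  exact continuous_finset_sum _ fun j _ =>
    continuous_const.mul (continuous_finset_prod _ fun k _ => continuous_apply _)


lemma tApply_add_const (A : Tensor m n) (c : ℝ) (x : Fin n → ℝ) (i : Fin n) :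
    tApply (fun idx => A idx + c) x i
      = tApply A x i + c * tApply (fun _ => (1:ℝ) : Tensor m n) x i := by
  unfold tApply
  rw [Finset.mul_sum, ← Finset.sum_add_distrib]
  exact Finset.sum_congr rfl fun j _ => by ring

lemma pow_add_le_aux (m : ℕ) (a t : ℝ) (ha0 : 0 ≤ a) (ha1 : a ≤ 1) (ht0 : 0 ≤ t)
    (ht1 : t ≤ 1) : (a + t) ^ m ≤ a ^ m + t * (2 ^ m - 1) := by
  induction m with
  | zero => simp
  | succ m ih =>
    have h2 : (0:ℝ) ≤ 2 ^ m - 1 := by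
      have : (1:ℝ) ≤ 2 ^ m := one_le_pow₀ (by norm_num)
      linarith
    have ham : a ^ m ≤ 1 := pow_le_one₀ ha0 ha1
    have hst : (a + t) ^ (m+1) = (a+t)^m * (a+t) := pow_succ _ _
    have h1 : (a+t)^m * (a+t) ≤ (a ^ m + t * (2 ^ m - 1)) * (a + t) :=
      mul_le_mul_of_nonneg_right ih (by linarith)
    have hpa : a^m * a = a^(m+1) := (pow_succ _ _).symm
    have h3 : t * a ^ m ≤ t * 1 := mul_le_mul_of_nonneg_left ham ht0
    have h4 : (0:ℝ) ≤ (2 - (a+t)) * (t * (2^m - 1)) :=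
      mul_nonneg (by linarith) (mul_nonneg ht0 h2)
    have h5 : (2:ℝ)^(m+1) = 2 * 2^m := by ring
    nlinarith [h1, h3, h4]

lemma posPF (hm : m ≠ 0) (hn : 0 < n) (B : Tensor m n) (hB : ∀ idx, 0 < B idx)
    (R μ : ℝ) (hμ0 : 0 ≤ μ)
    (hR : ∀ i, (∑ j : Fin m → Fin n, B (Fin.cons i j)) ≤ R)
    (z : Fin n → ℝ) (hz : ∀ i, 0 < z i)
    (hμz : ∀ i, μ * z i ^ m ≤ tApply B z i) :
    ∃ (lam : ℝ) (w : Fin n → ℝ), μ ≤ lam ∧ lam ≤ R ∧ (∀ i, 0 ≤ w i) ∧ (∀ i, w i ≤ 1) ∧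
      (∃ i, w i = 1) ∧ ∀ i, tApply B w i = lam * w i ^ m := by
  have hBnn : TNonneg B := fun idx => (hB idx).le
  have hne : (Finset.univ : Finset (Fin n)).Nonempty := ⟨⟨0, hn⟩, Finset.mem_univ _⟩
  -- the compact set of sub-eigenpairs
  set T1 : Set (ℝ × (Fin n → ℝ)) := {p | ∃ i, p.2 i = 1} with hT1
  set T2 : Set (ℝ × (Fin n → ℝ)) := {p | ∀ i, p.1 * p.2 i ^ m ≤ tApply B p.2 i} with hT2
  set S : Set (ℝ × (Fin n → ℝ)) := (Set.Icc μ R ×ˢ Set.Icc 0 1) ∩ (T1 ∩ T2) with hS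
  have hC1 : IsClosed T1 := by
    have : T1 = ⋃ i, {p : ℝ × (Fin n → ℝ) | p.2 i = 1} := by
      ext p; simp [hT1]
    rw [this]
    exact isClosed_iUnion_of_finite fun i =>
      isClosed_eq ((continuous_apply i).comp continuous_snd) continuous_const
  have hC2 : IsClosed T2 := by
    have : T2 = ⋂ i, {p : ℝ × (Fin n → ℝ) | p.1 * p.2 i ^ m ≤ tApply B p.2 i} := by
      ext p; simp [hT2]
    rw [this]
    exact isClosed_iInter fun i =>
      isClosed_le (continuous_fst.mul (((continuous_apply i).comp continuous_snd).pow m))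
        ((tApply_continuous B i).comp continuous_snd)
  have hScomp : IsCompact S := (isCompact_Icc.prod isCompact_Icc).inter_right (hC1.inter hC2)
  -- nonemptiness
  obtain ⟨i1, -, hi1⟩ := Finset.exists_mem_eq_sup' hne z
  have hzle : ∀ i, z i ≤ z i1 := fun i => hi1 ▸ Finset.le_sup' z (Finset.mem_univ i)
  have hz1pos : 0 < z i1 := hz i1
  set z' : Fin n → ℝ := fun i => (z i1)⁻¹ * z i with hz'
  have hz'0 : ∀ i, 0 ≤ z' i := fun i => mul_nonneg (inv_nonneg.mpr hz1pos.le) (hz i).le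
  have hz'1 : ∀ i, z' i ≤ 1 := by
    intro i
    show (z i1)⁻¹ * z i ≤ 1
    rw [mul_comm, ← div_eq_mul_inv, div_le_one hz1pos]
    exact hzle i
  have hz'i1 : z' i1 = 1 := inv_mul_cancel₀ hz1pos.ne'
  have hz'ineq : ∀ i, μ * z' i ^ m ≤ tApply B z' i := by
    intro i
    have h1 : tApply B z' i = (z i1)⁻¹ ^ m * tApply B z i := tApply_smul B _ z i
    have h2 : μ * z' i ^ m = (z i1)⁻¹ ^ m * (μ * z i ^ m) := by
      show μ * ((z i1)⁻¹ * z i) ^ m = _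
      rw [mul_pow]; ring
    rw [h1, h2]
    exact mul_le_mul_of_nonneg_left (hμz i) (pow_nonneg (inv_nonneg.mpr hz1pos.le) m)
  have hμR : μ ≤ R := by
    have h1 : μ = μ * z' i1 ^ m := by rw [hz'i1]; simp
    calc μ = μ * z' i1 ^ m := h1
      _ ≤ tApply B z' i1 := hz'ineq i1
      _ ≤ ∑ j : Fin m → Fin n, B (Fin.cons i1 j) := tApply_le_rowSum B hBnn hz'0 hz'1 i1
      _ ≤ R := hR i1
  have hSne : S.Nonempty := by
    refine ⟨(μ, z'), ⟨⟨le_refl μ, hμR⟩, ?_, ?_⟩, ⟨i1, hz'i1⟩, hz'ineq⟩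
    · intro i; simpa using hz'0 i
    · intro i; simpa using hz'1 i
  -- take sSup of the projection
  set Λ := Prod.fst '' S with hΛ
  have hΛcomp : IsCompact Λ := hScomp.image continuous_fst
  have hΛne : Λ.Nonempty := hSne.image _
  obtain ⟨q, hqS, hqlam⟩ := hΛcomp.sSup_mem hΛne
  obtain ⟨lam, w⟩ := q
  obtain ⟨⟨hlamI, hwI⟩, hex1, hineq⟩ := hqS
  replace hqlam : lam = sSup Λ := hqlam
  replace hex1 : ∃ i, w i = 1 := hex1
  replace hineq : ∀ i, lam * w i ^ m ≤ tApply B w i := hineq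
  replace hlamI : lam ∈ Set.Icc μ R := hlamI
  replace hwI : w ∈ Set.Icc (0 : Fin n → ℝ) 1 := hwI
  have hub : ∀ r ∈ Λ, r ≤ lam := by
    intro r hr; rw [hqlam]; exact le_csSup hΛcomp.bddAbove hr
  have w0 : ∀ i, 0 ≤ w i := fun i => by simpa using hwI.1 i
  have w1 : ∀ i, w i ≤ 1 := fun i => by simpa using hwI.2 i
  refine ⟨lam, w, hlamI.1, hlamI.2, w0, w1, hex1, ?_⟩
  -- equality upgrade
  by_contra hcon
  push_neg at hcon
  obtain ⟨i0, hne0⟩ := hcon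
  have hlt : lam * w i0 ^ m < tApply B w i0 := lt_of_le_of_ne (hineq i0) (Ne.symm hne0)
  set s := tApply B w i0 - lam * w i0 ^ m with hsdef
  have hspos : 0 < s := sub_pos.mpr hlt
  have hneidx : (Finset.univ : Finset (Fin (m+1) → Fin n)).Nonempty :=
    ⟨fun _ => i0, Finset.mem_univ _⟩
  set δ := Finset.univ.inf' hneidx B with hδdef
  have hδpos : 0 < δ := by
    rw [hδdef, Finset.lt_inf'_iff]
    exact fun idx _ => hB idx
  have hδle : ∀ idx, δ ≤ B idx := fun idx => Finset.inf'_le _ (Finset.mem_univ idx)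
  have hlam0 : 0 ≤ lam := le_trans hμ0 hlamI.1
  have h2m1 : (0:ℝ) ≤ 2 ^ m - 1 := by
    have : (1:ℝ) ≤ 2 ^ m := one_le_pow₀ (by norm_num)
    linarith
  have h2mpos : (0:ℝ) < 2 ^ m := by positivity
  set C := lam * (2 ^ m - 1) + 1 with hCdef
  have hCpos : 0 < C := by nlinarith
  set t := min 1 (s / (2 * C)) with htdef
  have htpos : 0 < t := lt_min one_pos (div_pos hspos (by linarith))
  have ht1 : t ≤ 1 := min_le_left _ _
  have htC : t * C ≤ s / 2 := by
    have h := min_le_right 1 (s / (2 * C))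
    calc t * C ≤ (s / (2 * C)) * C := mul_le_mul_of_nonneg_right h hCpos.le
      _ = s / 2 := by field_simp
  set η := min (δ * t ^ m) (s / (2 * 2 ^ m)) with hηdef
  have hηpos : 0 < η := lt_min (by positivity) (by positivity)
  have hηδ : η ≤ δ * t ^ m := min_le_left _ _
  have hη2 : η * 2 ^ m ≤ s / 2 := by
    have h := min_le_right (δ * t ^ m) (s / (2 * 2 ^ m))
    calc η * 2 ^ m ≤ (s / (2 * 2 ^ m)) * 2 ^ m := mul_le_mul_of_nonneg_right h h2mpos.le
      _ = s / 2 := by field_simp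
  set w' := Function.update w i0 (w i0 + t) with hw'def
  have hw'i0 : w' i0 = w i0 + t := Function.update_self _ _ _
  have hw'ne : ∀ i, i ≠ i0 → w' i = w i := fun i hi => Function.update_of_ne hi _ _
  have hww' : ∀ i, w i ≤ w' i := by
    intro i; by_cases h : i = i0
    · subst h; rw [hw'i0]; linarith
    · rw [hw'ne i h]
  have hw'0 : ∀ i, 0 ≤ w' i := fun i => le_trans (w0 i) (hww' i)
  have key2 : ∀ i, i ≠ i0 → tApply B w i + δ * t ^ m ≤ tApply B w' i := by
    intro i hi
    set f : (Fin m → Fin n) → ℝ := fun j => B (Fin.cons i j) * ∏ k, w (j k) with hf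
    set g : (Fin m → Fin n) → ℝ := fun j => B (Fin.cons i j) * ∏ k, w' (j k) with hg
    have hfg : ∀ j, 0 ≤ g j - f j := by
      intro j
      have hp := Finset.prod_le_prod (s := (Finset.univ : Finset (Fin m))) (f := fun k => w (j k)) (g := fun k => w' (j k)) (fun k _ => w0 (j k)) (fun k _ => hww' (j k))
      have := mul_le_mul_of_nonneg_left hp (hB (Fin.cons i j)).le
      simpa [hf, hg, sub_nonneg] using this
    have hgap : t ^ m ≤ (w i0 + t) ^ m - w i0 ^ m := by
      have h := pow_add_pow_le (w0 i0) htpos.le hm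
      linarith
    have hj0 : δ * t ^ m ≤ g (fun _ => i0) - f (fun _ => i0) := by
      have e1 : g (fun _ => i0) = B (Fin.cons i fun _ => i0) * (w i0 + t) ^ m := by
        rw [hg]
        simp only []
        rw [Finset.prod_const, Finset.card_univ, Fintype.card_fin, hw'i0]
      have e2 : f (fun _ => i0) = B (Fin.cons i fun _ => i0) * w i0 ^ m := by
        rw [hf]
        simp only []
        rw [Finset.prod_const, Finset.card_univ, Fintype.card_fin]
      rw [e1, e2, ← mul_sub]
      calc δ * t ^ m ≤ δ * ((w i0 + t) ^ m - w i0 ^ m) :=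
            mul_le_mul_of_nonneg_left hgap hδpos.le
        _ ≤ B (Fin.cons i fun _ => i0) * ((w i0 + t) ^ m - w i0 ^ m) := by
            refine mul_le_mul_of_nonneg_right (hδle _) ?_
            have := pow_nonneg htpos.le m
            linarith
    have hsum : g (fun _ => i0) - f (fun _ => i0) ≤ ∑ j : Fin m → Fin n, (g j - f j) :=
      Finset.single_le_sum (fun j _ => hfg j) (Finset.mem_univ _)
    have hdiff : tApply B w' i - tApply B w i = ∑ j : Fin m → Fin n, (g j - f j) := by
      unfold tApply
      rw [Finset.sum_sub_distrib]
    linarith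
  have key1 : tApply B w i0 ≤ tApply B w' i0 := tApply_mono B hBnn w0 hww' i0
  have hi0bound : (lam + η) * (w i0 + t) ^ m ≤ tApply B w' i0 := by
    have e1 : (w i0 + t) ^ m ≤ w i0 ^ m + t * (2 ^ m - 1) :=
      pow_add_le_aux m _ _ (w0 i0) (w1 i0) htpos.le ht1
    have e2 : (w i0 + t) ^ m ≤ 2 ^ m := by
      calc (w i0 + t) ^ m ≤ (1 + 1) ^ m :=
            pow_le_pow_left₀ (by linarith [w0 i0, htpos.le]) (by linarith [w1 i0, ht1]) m
        _ = 2 ^ m := by norm_num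
    have e3 : lam * (w i0 + t) ^ m ≤ lam * (w i0 ^ m + t * (2 ^ m - 1)) :=
      mul_le_mul_of_nonneg_left e1 hlam0
    have e4 : lam * (t * (2 ^ m - 1)) ≤ t * C := by
      rw [hCdef]
      have : lam * (t * (2 ^ m - 1)) = t * (lam * (2 ^ m - 1)) := by ring
      rw [this]
      refine mul_le_mul_of_nonneg_left ?_ htpos.le
      linarith
    have e5 : η * (w i0 + t) ^ m ≤ η * 2 ^ m := mul_le_mul_of_nonneg_left e2 hηpos.le
    have : (lam + η) * (w i0 + t) ^ m = lam * (w i0 + t) ^ m + η * (w i0 + t) ^ m := by ring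
    rw [this]
    calc lam * (w i0 + t) ^ m + η * (w i0 + t) ^ m
        ≤ (lam * w i0 ^ m + lam * (t * (2 ^ m - 1))) + η * 2 ^ m := by
          have := mul_le_mul_of_nonneg_left e1 hlam0
          nlinarith [e5]
      _ ≤ lam * w i0 ^ m + s / 2 + s / 2 := by linarith [e4, htC, hη2]
      _ = tApply B w i0 := by rw [hsdef]; ring
      _ ≤ tApply B w' i0 := key1
  have hkey : ∀ i, (lam + η) * w' i ^ m ≤ tApply B w' i := by
    intro i
    by_cases h : i = i0
    · subst h; rw [hw'i0]; exact hi0bound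
    · rw [hw'ne i h]
      have hwm1 : w i ^ m ≤ 1 := pow_le_one₀ (w0 i) (w1 i)
      have : (lam + η) * w i ^ m = lam * w i ^ m + η * w i ^ m := by ring
      rw [this]
      have e1 : η * w i ^ m ≤ η * 1 := mul_le_mul_of_nonneg_left hwm1 hηpos.le
      calc lam * w i ^ m + η * w i ^ m ≤ tApply B w i + δ * t ^ m := by
            have := hineq i
            linarith [e1, hηδ]
        _ ≤ tApply B w' i := key2 i h
  -- normalize w'
  obtain ⟨iS, -, hiS⟩ := Finset.exists_mem_eq_sup' hne w'
  have hw'le : ∀ i, w' i ≤ w' iS := fun i => hiS ▸ Finset.le_sup' w' (Finset.mem_univ i)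
  have hMw1 : 1 ≤ w' iS := by
    obtain ⟨ione, hione⟩ := hex1
    calc (1:ℝ) = w ione := hione.symm
      _ ≤ w' ione := hww' ione
      _ ≤ w' iS := hw'le ione
  have hMwpos : 0 < w' iS := lt_of_lt_of_le one_pos hMw1
  set w'' : Fin n → ℝ := fun i => (w' iS)⁻¹ * w' i with hw''def
  have hw''0 : ∀ i, 0 ≤ w'' i := fun i => mul_nonneg (inv_nonneg.mpr hMwpos.le) (hw'0 i)
  have hw''1 : ∀ i, w'' i ≤ 1 := by
    intro i
    show (w' iS)⁻¹ * w' i ≤ 1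
    rw [mul_comm, ← div_eq_mul_inv, div_le_one hMwpos]
    exact hw'le i
  have hw''iS : w'' iS = 1 := inv_mul_cancel₀ hMwpos.ne'
  have hw''ineq : ∀ i, (lam + η) * w'' i ^ m ≤ tApply B w'' i := by
    intro i
    have h1 : tApply B w'' i = (w' iS)⁻¹ ^ m * tApply B w' i := tApply_smul B _ w' i
    have h2 : (lam + η) * w'' i ^ m = (w' iS)⁻¹ ^ m * ((lam + η) * w' i ^ m) := by
      show (lam + η) * ((w' iS)⁻¹ * w' i) ^ m = _
      rw [mul_pow]; ring
    rw [h1, h2]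
    exact mul_le_mul_of_nonneg_left (hkey i) (pow_nonneg (inv_nonneg.mpr hMwpos.le) m)
  have hlamηR : lam + η ≤ R := by
    have h1 : lam + η = (lam + η) * w'' iS ^ m := by rw [hw''iS]; simp
    calc lam + η = (lam + η) * w'' iS ^ m := h1
      _ ≤ tApply B w'' iS := hw''ineq iS
      _ ≤ ∑ j : Fin m → Fin n, B (Fin.cons iS j) := tApply_le_rowSum B hBnn hw''0 hw''1 iS
      _ ≤ R := hR iS
  have hmemS : (lam + η, w'') ∈ S := by
    refine ⟨⟨⟨show μ ≤ lam + η by linarith [hlamI.1], hlamηR⟩, ?_, ?_⟩, ⟨iS, hw''iS⟩, hw''ineq⟩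
    · intro i; simpa using hw''0 i
    · intro i; simpa using hw''1 i
  have : lam + η ≤ lam := hub _ ⟨(lam + η, w''), hmemS, rfl⟩
  linarith
end H

/-- Collatz lower bound for the spectral radius. -/
theorem stmt19 {m n : ℕ} (hn : 0 < n) (A : Tensor m n) (hA : TNonneg A)
    (x : Fin n → ℝ) (hx : ∀ i, 0 < x i)
    (u : Fin n → ℝ) (hu0 : u ≠ 0) (hunn : ∀ i, 0 ≤ u i)
    (hue : ∀ i, tApply A u i = specRad A * (u i) ^ m) :
    Finset.univ.inf' (Finset.univ_nonempty_iff.mpr ⟨⟨0, hn⟩⟩)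
      (fun i => tApply A x i / (x i) ^ m) ≤ specRad A := by
  have hne : (Finset.univ : Finset (Fin n)).Nonempty := ⟨⟨0, hn⟩, Finset.mem_univ _⟩
  by_cases hm : m = 0
  · subst hm
    have hconst : ∀ v : Fin n → ℝ, ∀ i, tApply A v i
        = ∑ j : Fin 0 → Fin n, A (Fin.cons i j) := by
      intro v i
      unfold tApply
      refine Finset.sum_congr rfl fun j _ => ?_
      simp
    have hAx : ∀ i, tApply A x i = specRad A := by
      intro i
      rw [hconst x i, ← hconst u i, hue i, pow_zero, mul_one]
    refine le_trans (Finset.inf'_le _ (Finset.mem_univ ⟨0, hn⟩)) ?_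
    show tApply A x ⟨0, hn⟩ / x ⟨0, hn⟩ ^ 0 ≤ specRad A
    rw [hAx, pow_zero, div_one]
  · by_contra hcon
    push_neg at hcon
    set μ := Finset.univ.inf' (Finset.univ_nonempty_iff.mpr ⟨⟨0, hn⟩⟩)
      (fun i => tApply A x i / (x i) ^ m) with hμdef
    have hμ0 : 0 ≤ μ := by
      rw [hμdef]
      apply Finset.le_inf'
      intro i _
      exact div_nonneg (tApply_nonneg A hA x (fun i => (hx i).le) i) (pow_nonneg (hx i).le m)
    have hμx : ∀ i, μ * x i ^ m ≤ tApply A x i := by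
      intro i
      have h1 : μ ≤ tApply A x i / x i ^ m :=
        Finset.inf'_le (fun i => tApply A x i / x i ^ m) (Finset.mem_univ i)
      have h2 : (0:ℝ) < x i ^ m := pow_pos (hx i) m
      calc μ * x i ^ m ≤ (tApply A x i / x i ^ m) * x i ^ m :=
            mul_le_mul_of_nonneg_right h1 h2.le
        _ = tApply A x i := div_mul_cancel₀ _ h2.ne'
    set R1 : ℝ := Finset.univ.sup' hne
      (fun i => ∑ j : Fin m → Fin n, (A (Fin.cons i j) + 1)) with hR1def
    have hex : ∀ k : ℕ, ∃ (lam : ℝ) (w : Fin n → ℝ), μ ≤ lam ∧ lam ≤ R1 ∧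
        (∀ i, 0 ≤ w i) ∧ (∀ i, w i ≤ 1) ∧ (∃ i, w i = 1) ∧
        ∀ i, tApply (fun idx => A idx + 1/((k:ℝ)+1)) w i = lam * w i ^ m := by
      intro k
      have hc0 : (0:ℝ) < 1/((k:ℝ)+1) := by positivity
      have hc1 : (1:ℝ)/((k:ℝ)+1) ≤ 1 := by
        rw [div_le_one (by positivity)]
        have : (0:ℝ) ≤ (k:ℝ) := Nat.cast_nonneg k
        linarith
      refine posPF hm hn _ (fun idx => lt_of_lt_of_le hc0 (le_add_of_nonneg_left (hA idx)))
        R1 μ hμ0 ?_ x hx ?_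
      · intro i
        calc ∑ j : Fin m → Fin n, (A (Fin.cons i j) + 1/((k:ℝ)+1))
            ≤ ∑ j : Fin m → Fin n, (A (Fin.cons i j) + 1) :=
              Finset.sum_le_sum fun j _ => by linarith
          _ ≤ R1 := Finset.le_sup'
              (f := fun i => ∑ j : Fin m → Fin n, (A (Fin.cons i j) + 1)) (Finset.mem_univ i)
      · intro i
        have h1 : tApply (fun idx => A idx + 1/((k:ℝ)+1)) x i
            = tApply A x i + (1/((k:ℝ)+1)) * tApply (fun _ => (1:ℝ) : Tensor m n) x i :=
          tApply_add_const A _ x i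
        have h2 : 0 ≤ tApply (fun _ => (1:ℝ) : Tensor m n) x i :=
          tApply_nonneg _ (fun _ => zero_le_one) x (fun i => (hx i).le) i
        rw [h1]
        have := hμx i
        nlinarith [hc0]
    choose lamseq wseq hμlam hlamR1 hw0 hw1 hwex heig using hex
    set seq : ℕ → ℝ × (Fin n → ℝ) := fun k => (lamseq k, wseq k) with hseqdef
    have hseqK : ∀ k, seq k ∈ (Set.Icc μ R1 ×ˢ Set.Icc (0 : Fin n → ℝ) 1) := by
      intro k
      refine ⟨⟨hμlam k, hlamR1 k⟩, ?_, ?_⟩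
      · intro i; simpa using hw0 k i
      · intro i; simpa using hw1 k i
    obtain ⟨p, hpK, φ, hφ, hconv⟩ := (isCompact_Icc.prod isCompact_Icc).tendsto_subseq hseqK
    have hlamb : Filter.Tendsto (fun l => lamseq (φ l)) Filter.atTop (𝓝 p.1) :=
      (continuous_fst.tendsto p).comp hconv
    have hwb : Filter.Tendsto (fun l => wseq (φ l)) Filter.atTop (𝓝 p.2) :=
      (continuous_snd.tendsto p).comp hconv
    have hwbi : ∀ i, Filter.Tendsto (fun l => wseq (φ l) i) Filter.atTop (𝓝 (p.2 i)) :=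
      fun i => ((continuous_apply i).tendsto p.2).comp hwb
    have hφat : Filter.Tendsto φ Filter.atTop Filter.atTop := hφ.tendsto_atTop
    have hcast : Filter.Tendsto (fun l => ((φ l : ℝ) + 1)) Filter.atTop Filter.atTop :=
      Filter.tendsto_atTop_add_const_right _ 1 (tendsto_natCast_atTop_atTop.comp hφat)
    have hc0lim : Filter.Tendsto (fun l => 1/((φ l : ℝ)+1)) Filter.atTop (𝓝 0) := by
      rw [show (fun l => 1/((φ l : ℝ)+1)) = (fun l => ((φ l : ℝ)+1))⁻¹ from funext fun l => one_div _]
      exact hcast.inv_tendsto_atTop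
    have heigb : ∀ i, tApply A p.2 i = p.1 * p.2 i ^ m := by
      intro i
      have hL : Filter.Tendsto (fun l => tApply A (wseq (φ l)) i
          + (1/((φ l : ℝ)+1)) * tApply (fun _ => (1:ℝ) : Tensor m n) (wseq (φ l)) i)
          Filter.atTop (𝓝 (tApply A p.2 i
            + 0 * tApply (fun _ => (1:ℝ) : Tensor m n) p.2 i)) :=
        (((tApply_continuous A i).tendsto p.2).comp hwb).add
          (hc0lim.mul (((tApply_continuous (fun _ => (1:ℝ) : Tensor m n) i).tendsto p.2).comp hwb))
      have hRt : Filter.Tendsto (fun l => lamseq (φ l) * wseq (φ l) i ^ m) Filter.atTop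
          (𝓝 (p.1 * p.2 i ^ m)) := hlamb.mul ((hwbi i).pow m)
      have hEq : (fun l => tApply A (wseq (φ l)) i
          + (1/((φ l : ℝ)+1)) * tApply (fun _ => (1:ℝ) : Tensor m n) (wseq (φ l)) i)
          = fun l => lamseq (φ l) * wseq (φ l) i ^ m := by
        funext l
        rw [← tApply_add_const]
        exact heig (φ l) i
      rw [hEq] at hL
      have := tendsto_nhds_unique hL hRt
      simpa using this
    have hwb0 : ∀ i, 0 ≤ p.2 i := fun i => by simpa using hpK.2.1 i
    have hμlamb : μ ≤ p.1 := hpK.1.1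
    have hsum1 : ∀ l, (1:ℝ) ≤ ∑ i, wseq (φ l) i := by
      intro l
      obtain ⟨i, hi⟩ := hwex (φ l)
      calc (1:ℝ) = wseq (φ l) i := hi.symm
        _ ≤ ∑ i, wseq (φ l) i :=
            Finset.single_le_sum (fun i _ => hw0 (φ l) i) (Finset.mem_univ i)
    have hsumlim : Filter.Tendsto (fun l => ∑ i, wseq (φ l) i) Filter.atTop
        (𝓝 (∑ i, p.2 i)) := tendsto_finset_sum _ (fun i _ => hwbi i)
    have h1sum : (1:ℝ) ≤ ∑ i, p.2 i :=
      ge_of_tendsto hsumlim (Filter.Eventually.of_forall hsum1)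
    have hwbne : ∃ i, p.2 i ≠ 0 := by
      by_contra hall
      push_neg at hall
      have : ∑ i, p.2 i = 0 := Finset.sum_eq_zero (fun i _ => hall i)
      linarith
    have hIs : IsEig A ((p.1 : ℝ) : ℂ) := by
      refine ⟨fun i => (p.2 i : ℂ), ?_, ?_⟩
      · obtain ⟨i, hi⟩ := hwbne
        intro h0
        exact hi (by simpa using congrFun h0 i)
      · intro i
        have hcast2 : tApplyC A (fun i => (p.2 i : ℂ)) i = ((tApply A p.2 i : ℝ) : ℂ) := by
          unfold tApplyC tApply
          push_cast
          rfl
        rw [hcast2, heigb i]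
        push_cast
        ring
    have hmem : p.1 ∈ {r : ℝ | ∃ lam : ℂ, IsEig A lam ∧ ‖lam‖ = r} :=
      ⟨((p.1 : ℝ) : ℂ), hIs, by
        rw [Complex.norm_real, Real.norm_eq_abs]; exact abs_of_nonneg (le_trans hμ0 hμlamb)⟩
    have hle : p.1 ≤ specRad A := le_csSup (eig_bddAbove hn A hA) hmem
    linarith
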